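/- Zeeman's theorem fails in dimension 2: there exists a bijection F : ℝ² → ℝ² such that for all x, y ∈ ℝ², x ≤ y if and only if F(x) ≤ F(y) (where ≤ is the causal relation of 2-dimensional Minkowski space), but F is not of the form F(x) = a • (A x) + b for any real a > 0, Lorentz matrix A, and vector b ∈ ℝ². -/
import Mathlib


/-- The Minkowski quadratic form on `ℝ²`: `Q v = v₀² - v₁²`. -/
def minkowskiQ (v : Fin 2 → ℝ) : ℝ :=
  (v 0) ^ 2 - (v 1) ^ 2

/-- The causal relation on 2-dimensional Minkowski space:
`x ≤ y` iff `Q (y - x) ≥ 0` and `(y - x)₀ ≥ 0`. -/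
def causalLE (x y : Fin 2 → ℝ) : Prop :=
  0 ≤ minkowskiQ (y - x) ∧ 0 ≤ (y - x) 0

/-- A `2 × 2` matrix is Lorentz if it preserves the Minkowski quadratic form. -/
def IsLorentz (A : Matrix (Fin 2) (Fin 2) ℝ) : Prop :=
  ∀ v : Fin 2 → ℝ, minkowskiQ (A.mulVec v) = minkowskiQ v

/-- A nonlinear increasing bijection of `ℝ`. -/
noncomputable def zf : ℝ → ℝ := fun u => if 0 < u then 2 * u else u

/-- Inverse of `zf`. -/
noncomputable def zg : ℝ → ℝ := fun u => if 0 < u then u / 2 else u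

lemma zf_strictMono : StrictMono zf := by
  intro a b h
  unfold zf
  split_ifs <;> linarith

lemma zg_zf (u : ℝ) : zg (zf u) = u := by
  unfold zf zg
  split_ifs <;> first | rfl | linarith

lemma zf_zg (u : ℝ) : zf (zg u) = u := by
  unfold zf zg
  split_ifs <;> first | rfl | linarith

/-- The counterexample map, in null coordinates `(u, v) ↦ (zf u, v)`. -/
noncomputable def zF : (Fin 2 → ℝ) → (Fin 2 → ℝ) := fun x =>
  ![(zf (x 0 + x 1) + (x 0 - x 1)) / 2, (zf (x 0 + x 1) - (x 0 - x 1)) / 2]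

noncomputable def zG : (Fin 2 → ℝ) → (Fin 2 → ℝ) := fun y =>
  ![(zg (y 0 + y 1) + (y 0 - y 1)) / 2, (zg (y 0 + y 1) - (y 0 - y 1)) / 2]

lemma causalLE_iff (x y : Fin 2 → ℝ) :
    causalLE x y ↔ (x 0 + x 1 ≤ y 0 + y 1 ∧ x 0 - x 1 ≤ y 0 - y 1) := by
  unfold causalLE minkowskiQ
  simp only [Pi.sub_apply]
  constructor
  · rintro ⟨h1, h2⟩
    constructor <;> nlinarith [sq_nonneg (y 0 - x 0 + (y 1 - x 1)), sq_nonneg (y 0 - x 0 - (y 1 - x 1))]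
  · rintro ⟨h1, h2⟩
    constructor <;> nlinarith

/-- Zeeman's theorem fails in dimension 2: there is a causal isomorphism of
2-dimensional Minkowski space that is not of the form `x ↦ a • (A x) + b` with
`a > 0` and `A` a Lorentz matrix. -/
theorem zeeman_fails_in_dim_two :
    ∃ F : (Fin 2 → ℝ) → (Fin 2 → ℝ),
      Function.Bijective F ∧
      (∀ x y : Fin 2 → ℝ, causalLE x y ↔ causalLE (F x) (F y)) ∧
      ¬ ∃ (a : ℝ) (A : Matrix (Fin 2) (Fin 2) ℝ) (b : Fin 2 → ℝ),
          0 < a ∧ IsLorentz A ∧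
          ∀ x : Fin 2 → ℝ, F x = a • A.mulVec x + b := by
  refine ⟨zF, ?_, ?_, ?_⟩
  · rw [Function.bijective_iff_has_inverse]
    refine ⟨zG, ?_, ?_⟩
    · intro x
      have key : (zf (x 0 + x 1) + (x 0 - x 1)) / 2 + (zf (x 0 + x 1) - (x 0 - x 1)) / 2
          = zf (x 0 + x 1) := by ring
      funext i
      fin_cases i <;>
      · show zG (zF x) _ = _
        simp only [zF, zG, Matrix.cons_val_zero, Matrix.cons_val_one, Matrix.head_cons, key,
          zg_zf]
        ring_nf
        simp [Fin.isValue]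
    · intro y
      have key : (zg (y 0 + y 1) + (y 0 - y 1)) / 2 + (zg (y 0 + y 1) - (y 0 - y 1)) / 2
          = zg (y 0 + y 1) := by ring
      funext i
      fin_cases i <;>
      · show zF (zG y) _ = _
        simp only [zF, zG, Matrix.cons_val_zero, Matrix.cons_val_one, Matrix.head_cons, key,
          zf_zg]
        ring_nf
        simp [Fin.isValue]
  · intro x y
    rw [causalLE_iff, causalLE_iff]
    have h0 : zF x 0 = (zf (x 0 + x 1) + (x 0 - x 1)) / 2 := rfl
    have h1 : zF x 1 = (zf (x 0 + x 1) - (x 0 - x 1)) / 2 := rfl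
    have h0' : zF y 0 = (zf (y 0 + y 1) + (y 0 - y 1)) / 2 := rfl
    have h1' : zF y 1 = (zf (y 0 + y 1) - (y 0 - y 1)) / 2 := rfl
    rw [h0, h1, h0', h1']
    have key : zf (x 0 + x 1) ≤ zf (y 0 + y 1) ↔ x 0 + x 1 ≤ y 0 + y 1 :=
      zf_strictMono.le_iff_le
    constructor
    · rintro ⟨ha, hb⟩
      have := key.mpr ha
      constructor <;> linarith
    · rintro ⟨ha, hb⟩
      have h1 : zf (x 0 + x 1) ≤ zf (y 0 + y 1) := by linarith
      have h2 := key.mp h1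
      constructor <;> linarith
  · rintro ⟨a, A, b, _ha, _hA, hF⟩
    have e0 : zF 0 0 = 0 := by norm_num [zF, zf]
    have ep : zF ![(1:ℝ)/2, 1/2] 0 = 1 := by norm_num [zF, zf]
    have em : zF (-![(1:ℝ)/2, 1/2]) 0 = -(1/2) := by norm_num [zF, zf]
    have c0 := congrFun (hF 0) 0
    have cp := congrFun (hF ![(1:ℝ)/2, 1/2]) 0
    have cm := congrFun (hF (-![(1:ℝ)/2, 1/2])) 0
    rw [e0, Matrix.mulVec_zero] at c0
    rw [ep] at cp
    rw [em, Matrix.mulVec_neg] at cm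
    simp only [Pi.add_apply, Pi.smul_apply, Pi.neg_apply, Pi.zero_apply, smul_eq_mul,
      smul_zero, zero_add, mul_neg, mul_zero] at c0 cp cm
    linarith
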